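/- If ψ(v₁) ≥ 0 then q₁ = 0 is not a maximizer of Π(·, v₁): Π(0, v₁) = ψ(v₁) while Π(1/2, v₁) = ψ(v₁) + (1/2)∫_{-∞}^{−ψ(v₁)} F(v₂|1/2) dv₂ > ψ(v₁). -/
import Mathlib


open MeasureTheory Set

/-- If the virtual value `ψ(v₁)` is nonnegative then `q₁ = 0` is not a
maximizer of `Π(·, v₁)`: `Π(0, v₁) = ψ(v₁)` while
`Π(1/2, v₁) = ψ(v₁) + (1/2)∫_{-∞}^{−ψ(v₁)} F(v₂|1/2) dv₂ > ψ(v₁)`. -/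
theorem stmt8 (F : ℝ → ℝ → ℝ) (ψ : ℝ → ℝ) (v₁ : ℝ)
    (hψ : 0 ≤ ψ v₁)
    (hF0 : ∀ v : ℝ, F v 0 = if v < 0 then 0 else 1)
    (hIntHalf : IntegrableOn (fun v => F v (1 / 2)) (Iic (-ψ v₁)) volume)
    (hposHalf : ∀ v : ℝ, 0 < F v (1 / 2)) :
    ψ v₁ + (1 - 0) * (∫ v in Iic (-ψ v₁), F v 0) = ψ v₁ ∧
    ψ v₁ < ψ v₁ + (1 - 1 / 2) * ∫ v in Iic (-ψ v₁), F v (1 / 2) := by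
  constructor
  · have h0 : (∫ v in Iic (-ψ v₁), F v 0) = 0 := by
      have he : (∫ v in Iic (-ψ v₁), F v 0) = ∫ _v in Iic (-ψ v₁), (0:ℝ) := by
        refine setIntegral_congr_ae measurableSet_Iic ?_
        have hz : (volume : Measure ℝ) {(0 : ℝ)} = 0 := measure_singleton 0
        filter_upwards [measure_eq_zero_iff_ae_notMem.mp hz] with v hv hvmem
        have hvlt : v < 0 := lt_of_le_of_ne (le_trans hvmem (by linarith)) (by simpa using hv)
        simp [hF0 v, hvlt]
      rw [he, integral_zero]
    rw [h0]; ring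
  · have hpos : 0 < ∫ v in Iic (-ψ v₁), F v (1 / 2) := by
      rw [setIntegral_pos_iff_support_of_nonneg_ae]
      · have : Function.support (fun v => F v (1 / 2)) = univ := by
          ext v; simpa [Function.mem_support] using (hposHalf v).ne'
        rw [this, univ_inter]
        simp [Real.volume_Iic]
      · filter_upwards with v using (hposHalf v).le
      · exact hIntHalf
    linarith
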